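/- arXiv:1509.01753 — 2 statements merged into one kernel-verified Lean document; each statement's English description precedes it below -/
import Mathlib

section
/- Let 1<q<2<p, M > 0 > A, and B real with -K_1(M,A) < B < 0 where K_1(M,A) = C_{pq} M^{(p-q)/(p-2)} (-A)^{-(2-q)/(p-2)}. Then φ(t) = M t^{2-q} + A t^{p-q} + B has exactly two positive zeros c_1 < c_2, and they satisfy c_1 < ((2-q)M/((p-q)(-A)))^{1/(p-2)} < c_2. -/
open Real Set

private lemma aux_factor_le_one (p q : ℝ) (hq1 : 1 < q) (hq2 : q < 2) (hp : 2 < p) :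
    q / 2 * (p / 2) ^ ((2 - q) / (p - 2)) ≤ 1 := by
  have hq0 : (0:ℝ) < q := by linarith
  have hp2 : (0:ℝ) < p - 2 := by linarith
  have h1 : Real.log (p/2) ≤ (p-2)/2 := by
    have := Real.log_le_sub_one_of_pos (show (0:ℝ) < p/2 by linarith)
    linarith
  have h2 : (2-q)/2 ≤ Real.log (2/q) := by
    have h3 := Real.log_le_sub_one_of_pos (show (0:ℝ) < q/2 by positivity)
    have hlog : Real.log (2/q) = - Real.log (q/2) := by
      rw [Real.log_div (by norm_num) (by positivity), Real.log_div (by positivity) (by norm_num)]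
      ring
    rw [hlog]; linarith
  have key : (p/2) ^ ((2-q)/(p-2)) ≤ 2/q := by
    have h2q : (0:ℝ) < 2/q := by positivity
    rw [Real.rpow_def_of_pos (by linarith : (0:ℝ) < p/2), ← Real.exp_log h2q]
    apply Real.exp_le_exp.mpr
    have hstep : Real.log (p/2) * ((2-q)/(p-2)) ≤ ((p-2)/2) * ((2-q)/(p-2)) :=
      mul_le_mul_of_nonneg_right h1 (div_nonneg (by linarith) (by linarith))
    have heq : ((p-2)/2) * ((2-q)/(p-2)) = (2-q)/2 := by
      field_simp
    linarith [heq ▸ hstep]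
  calc q / 2 * (p / 2) ^ ((2 - q) / (p - 2)) ≤ q / 2 * (2/q) :=
        mul_le_mul_of_nonneg_left key (by positivity)
    _ = 1 := by field_simp

set_option maxHeartbeats 1000000 in
/-- For `1 < q < 2 < p`, `M > 0 > A`, and `-K₁(M,A) < B < 0`, the function
`φ(t) = M t^(2-q) + A t^(p-q) + B` has exactly two positive zeros `c₁ < c₂`, and
`c₁ < ((2-q)M/((p-q)(-A)))^(1/(p-2)) < c₂`. -/
theorem stmt_4 (p q M A B : ℝ) (hq1 : 1 < q) (hq2 : q < 2) (hp : 2 < p)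
    (hM : 0 < M) (hA : A < 0)
    (hB1 : -((q * (p - 2) / (2 * (p - q))) * (p * (2 - q) / (2 * (p - q))) ^ ((2 - q) / (p - 2)) *
        M ^ ((p - q) / (p - 2)) / (-A) ^ ((2 - q) / (p - 2))) < B)
    (hB2 : B < 0) :
    ∃ c₁ c₂ : ℝ, 0 < c₁ ∧ c₁ < c₂ ∧
      M * c₁ ^ (2 - q) + A * c₁ ^ (p - q) + B = 0 ∧
      M * c₂ ^ (2 - q) + A * c₂ ^ (p - q) + B = 0 ∧
      (∀ t : ℝ, 0 < t → M * t ^ (2 - q) + A * t ^ (p - q) + B = 0 → t = c₁ ∨ t = c₂) ∧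
      c₁ < ((2 - q) * M / ((p - q) * (-A))) ^ (1 / (p - 2)) ∧
      ((2 - q) * M / ((p - q) * (-A))) ^ (1 / (p - 2)) < c₂ := by
  have hnA : (0:ℝ) < -A := by linarith
  have hpq : (0:ℝ) < p - q := by linarith
  have h2q : (0:ℝ) < 2 - q := by linarith
  have hp2 : (0:ℝ) < p - 2 := by linarith
  set α : ℝ := (2 - q) / (p - 2) with hαdef
  set X : ℝ := (2 - q) * M / ((p - q) * (-A)) with hXdef
  have hX : 0 < X := by positivity
  set t0 : ℝ := X ^ (1 / (p - 2)) with ht0def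
  have ht0 : 0 < t0 := Real.rpow_pos_of_pos hX _
  set f : ℝ → ℝ := fun t => M * t ^ (2 - q) + A * t ^ (p - q) + B with hfdef
  have ht0pow : t0 ^ (p - 2) = X := by
    rw [ht0def, one_div, Real.rpow_inv_rpow hX.le hp2.ne']
  -- continuity
  have hcont : Continuous f := by
    have c1 : Continuous fun t : ℝ => t ^ (2 - q) :=
      continuous_iff_continuousAt.mpr fun x => Real.continuousAt_rpow_const x _ (Or.inr h2q.le)
    have c2 : Continuous fun t : ℝ => t ^ (p - q) :=
      continuous_iff_continuousAt.mpr fun x => Real.continuousAt_rpow_const x _ (Or.inr (by linarith))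
    fun_prop
  -- derivative
  have hderiv : ∀ x : ℝ, 0 < x →
      HasDerivAt f (x ^ (2 - q - 1) * ((2 - q) * M + (p - q) * A * x ^ (p - 2))) x := by
    intro x hx
    have d1 : HasDerivAt (fun t : ℝ => t ^ (2 - q)) ((2 - q) * x ^ (2 - q - 1)) x :=
      Real.hasDerivAt_rpow_const (Or.inl hx.ne')
    have d2 : HasDerivAt (fun t : ℝ => t ^ (p - q)) ((p - q) * x ^ (p - q - 1)) x :=
      Real.hasDerivAt_rpow_const (Or.inl hx.ne')
    have := ((d1.const_mul M).add (d2.const_mul A)).add_const B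
    refine this.congr_deriv ?_
    have hsplit : x ^ (p - q - 1) = x ^ (2 - q - 1) * x ^ (p - 2) := by
      rw [← Real.rpow_add hx]; congr 1; ring
    rw [hsplit]; ring
  have hAX : (p - q) * A * X = -((2 - q) * M) := by
    rw [hXdef]; field_simp [hpq.ne', hA.ne]
  -- sign of derivative
  have hdpos : ∀ x : ℝ, 0 < x → x < t0 →
      0 < x ^ (2 - q - 1) * ((2 - q) * M + (p - q) * A * x ^ (p - 2)) := by
    intro x hx hxt
    have hlt : x ^ (p - 2) < X := by
      rw [← ht0pow]; exact Real.rpow_lt_rpow hx.le hxt hp2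
    have : (p - q) * A * x ^ (p - 2) > (p - q) * A * X := by
      apply mul_lt_mul_of_neg_left hlt; nlinarith
    have hx1 : 0 < x ^ (2 - q - 1) := Real.rpow_pos_of_pos hx _
    nlinarith
  have hdneg : ∀ x : ℝ, t0 < x →
      x ^ (2 - q - 1) * ((2 - q) * M + (p - q) * A * x ^ (p - 2)) < 0 := by
    intro x hxt
    have hx : 0 < x := ht0.trans hxt
    have hlt : X < x ^ (p - 2) := by
      rw [← ht0pow]; exact Real.rpow_lt_rpow ht0.le hxt hp2
    have : (p - q) * A * x ^ (p - 2) < (p - q) * A * X := by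
      apply mul_lt_mul_of_neg_left hlt; nlinarith
    have hx1 : 0 < x ^ (2 - q - 1) := Real.rpow_pos_of_pos hx _
    nlinarith
  -- monotonicity
  have hmono : StrictMonoOn f (Ioc 0 t0) := by
    apply strictMonoOn_of_deriv_pos (convex_Ioc _ _) hcont.continuousOn
    intro x hx
    rw [interior_Ioc] at hx
    rw [(hderiv x hx.1).deriv]
    exact hdpos x hx.1 hx.2
  have hanti : StrictAntiOn f (Ici t0) := by
    apply strictAntiOn_of_deriv_neg (convex_Ici _) hcont.continuousOn
    intro x hx
    rw [interior_Ici] at hx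
    rw [(hderiv x (ht0.trans hx)).deriv]
    exact hdneg x hx
  -- value at t0
  have ht0split : t0 ^ (p - q) = t0 ^ (2 - q) * X := by
    rw [← ht0pow, ← Real.rpow_add ht0]; congr 1; ring
  have ht02q : t0 ^ (2 - q) = X ^ α := by
    rw [ht0def, ← Real.rpow_mul hX.le, hαdef]; congr 1; field_simp
  have hAX2 : A * X = -((2 - q) * M) / (p - q) := by
    rw [hXdef]; field_simp [hpq.ne', hA.ne]
  have hft0eq : f t0 = X ^ α * M * (p - 2) / (p - q) + B := by
    show M * t0 ^ (2 - q) + A * t0 ^ (p - q) + B = _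
    rw [ht0split, ht02q,
      show A * (X ^ α * X) = (A * X) * X ^ α from by ring, hAX2]
    field_simp
    ring
  -- the key inequality K₁ ≤ X^α * M * (p-2)/(p-q)
  have hKeq : (q * (p - 2) / (2 * (p - q))) * (p * (2 - q) / (2 * (p - q))) ^ α *
      M ^ ((p - q) / (p - 2)) / (-A) ^ α
      = (q / 2 * (p / 2) ^ α) * (X ^ α * M * (p - 2) / (p - q)) := by
    have e1 : X ^ α = (2-q)^α * M^α / ((p-q)^α * (-A)^α) := by
      rw [hXdef, Real.div_rpow (by positivity) (by positivity),
        Real.mul_rpow h2q.le hM.le, Real.mul_rpow hpq.le hnA.le]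
    have e2 : (p * (2 - q) / (2 * (p - q))) ^ α = p^α * (2-q)^α / (2^α * (p-q)^α) := by
      rw [Real.div_rpow (by positivity) (by positivity),
        Real.mul_rpow (by linarith : (0:ℝ) ≤ p) h2q.le, Real.mul_rpow (by norm_num) hpq.le]
    have e3 : (p/2)^α = p^α/2^α := Real.div_rpow (by linarith) (by norm_num) α
    have e4 : M ^ ((p - q)/(p - 2)) = M * M ^ α := by
      rw [show (p - q)/(p - 2) = 1 + α from by rw [hαdef]; field_simp; ring,
        Real.rpow_add hM, Real.rpow_one]
    rw [e1, e2, e3, e4]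
    have n1 : (2:ℝ)^α ≠ 0 := (Real.rpow_pos_of_pos two_pos α).ne'
    have n2 : (p-q)^α ≠ 0 := (Real.rpow_pos_of_pos hpq α).ne'
    have n3 : (-A)^α ≠ 0 := (Real.rpow_pos_of_pos hnA α).ne'
    field_simp
  have hRpos : 0 < X ^ α * M * (p - 2) / (p - q) := by
    have := Real.rpow_pos_of_pos hX α
    positivity
  have hKle : (q * (p - 2) / (2 * (p - q))) * (p * (2 - q) / (2 * (p - q))) ^ α *
      M ^ ((p - q) / (p - 2)) / (-A) ^ α ≤ X ^ α * M * (p - 2) / (p - q) := by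
    rw [hKeq]
    calc (q / 2 * (p / 2) ^ α) * (X ^ α * M * (p - 2) / (p - q))
        ≤ 1 * (X ^ α * M * (p - 2) / (p - q)) :=
          mul_le_mul_of_nonneg_right (aux_factor_le_one p q hq1 hq2 hp) hRpos.le
      _ = _ := one_mul _
  have hft0 : 0 < f t0 := by
    rw [hft0eq]
    linarith
  -- left endpoint
  set eps : ℝ := min (t0/2) ((-B/(2*M)) ^ (1/(2-q))) with hepsdef
  have heps0 : 0 < eps :=
    lt_min (by positivity) (Real.rpow_pos_of_pos (div_pos (by linarith) (by linarith)) _)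
  have hepslt : eps < t0 := (min_le_left _ _).trans_lt (by linarith)
  have hfeps : f eps < 0 := by
    have h1 : eps ^ (2-q) ≤ -B/(2*M) := by
      calc eps ^ (2-q) ≤ ((-B/(2*M)) ^ (1/(2-q))) ^ (2-q) :=
            Real.rpow_le_rpow heps0.le (min_le_right _ _) h2q.le
        _ = -B/(2*M) := by
            rw [one_div, Real.rpow_inv_rpow (le_of_lt (div_pos (by linarith) (by linarith))) h2q.ne']
    have h2 : A * eps ^ (p-q) < 0 := mul_neg_of_neg_of_pos hA (Real.rpow_pos_of_pos heps0 _)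
    have h3 : M * eps ^ (2-q) ≤ -B/2 := by
      calc M * eps^(2-q) ≤ M * (-B/(2*M)) := mul_le_mul_of_nonneg_left h1 hM.le
        _ = -B/2 := by field_simp
    show M * eps ^ (2 - q) + A * eps ^ (p - q) + B < 0
    linarith
  -- right endpoint
  set T : ℝ := max (2*t0) ((M/(-A)) ^ (1/(p-2))) with hTdef
  have hTgt : t0 < T := lt_of_lt_of_le (by linarith) (le_max_left _ _)
  have hT0 : 0 < T := ht0.trans hTgt
  have hTpow : M/(-A) ≤ T ^ (p-2) := by
    have hb : (0:ℝ) < M/(-A) := by positivity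
    calc M/(-A) = ((M/(-A))^(1/(p-2)))^(p-2) := by
          rw [one_div, Real.rpow_inv_rpow hb.le hp2.ne']
      _ ≤ T^(p-2) :=
          Real.rpow_le_rpow (Real.rpow_pos_of_pos hb _).le (le_max_right _ _) hp2.le
  have hfT : f T < 0 := by
    have hsplit : T^(p-q) = T^(2-q) * T^(p-2) := by
      rw [← Real.rpow_add hT0]; congr 1; ring
    have e : A * (M / (-A)) = -M := by
      have h2 : -A ≠ 0 := by linarith
      rw [mul_div_assoc', div_eq_iff h2]; ring
    have hAT : A * T^(p-2) ≤ -M := by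
      have h4 := mul_le_mul_of_nonpos_left hTpow hA.le
      rw [e] at h4
      exact h4
    have hT2q : 0 < T^(2-q) := Real.rpow_pos_of_pos hT0 _
    have hmain : M * T^(2-q) + A * T^(p-q) ≤ 0 := by
      rw [hsplit]
      calc M*T^(2-q) + A*(T^(2-q)*T^(p-2)) = T^(2-q)*(M + A*T^(p-2)) := by ring
        _ ≤ T^(2-q) * 0 := mul_le_mul_of_nonneg_left (by linarith) hT2q.le
        _ = 0 := mul_zero _
    show M * T ^ (2 - q) + A * T ^ (p - q) + B < 0
    linarith
  -- zeros via IVT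
  obtain ⟨c₁, hc₁mem, hc₁⟩ := intermediate_value_Ioo hepslt.le hcont.continuousOn
    (show (0:ℝ) ∈ Ioo (f eps) (f t0) from ⟨hfeps, hft0⟩)
  obtain ⟨c₂, hc₂mem, hc₂⟩ := intermediate_value_Ioo' hTgt.le hcont.continuousOn
    (show (0:ℝ) ∈ Ioo (f T) (f t0) from ⟨hfT, hft0⟩)
  have hc₁pos : 0 < c₁ := heps0.trans hc₁mem.1
  refine ⟨c₁, c₂, hc₁pos, hc₁mem.2.trans hc₂mem.1, hc₁, hc₂, ?_, hc₁mem.2, hc₂mem.1⟩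
  intro t ht hft
  have hft' : f t = 0 := hft
  rcases lt_trichotomy t t0 with h | h | h
  · left
    exact hmono.injOn ⟨ht, h.le⟩ ⟨hc₁pos, hc₁mem.2.le⟩ (by rw [hft', hc₁])
  · exfalso
    rw [h] at hft'
    linarith [hft0, hft'.le]
  · right
    exact hanti.injOn h.le hc₂mem.1.le (by rw [hft', hc₂])
end

section
/- Let 1<q<2<p and M > 0 > A, with c_1, c_2 the two positive zeros of φ(t) = M t^{2-q} + A t^{p-q} + B (c_1 < c_2), where -K_1(M,A) < B < 0. Then the quantity Φ_t(c_j) := M + (p-1)c_j^{p-2}A + (q-1)c_j^{q-2}B satisfies c_j^{2-q} Φ_t(c_j) = (2-q)c_j^{2-q}M + (p-q)c_j^{p-q}A, and consequently Φ_t(c_1) > 0 while Φ_t(c_2) < 0. -/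
open Real Set

/-- Let `c₁ < c₂` be the two positive zeros of `φ(t) = M t^(2-q) + A t^(p-q) + B`
(`M > 0 > A`, `-K₁(M,A) < B < 0`).  Then `Φ_t(c) := M + (p-1)c^(p-2)A + (q-1)c^(q-2)B`
satisfies `c^(2-q) Φ_t(c) = (2-q)c^(2-q)M + (p-q)c^(p-q)A` for `c = c₁, c₂`, and
consequently `Φ_t(c₁) > 0` while `Φ_t(c₂) < 0`. -/
theorem stmt_15 (p q M A B c₁ c₂ : ℝ) (hq1 : 1 < q) (hq2 : q < 2) (hp : 2 < p)
    (hM : 0 < M) (hA : A < 0)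
    (hB1 : -((q * (p - 2) / (2 * (p - q))) *
        (p * (2 - q) / (2 * (p - q))) ^ ((2 - q) / (p - 2)) *
        M ^ ((p - q) / (p - 2)) / (-A) ^ ((2 - q) / (p - 2))) < B)
    (hB2 : B < 0)
    (hc1 : 0 < c₁) (hc12 : c₁ < c₂)
    (hz1 : M * c₁ ^ (2 - q) + A * c₁ ^ (p - q) + B = 0)
    (hz2 : M * c₂ ^ (2 - q) + A * c₂ ^ (p - q) + B = 0) :
    (∀ c : ℝ, c = c₁ ∨ c = c₂ →
        c ^ (2 - q) * (M + (p - 1) * c ^ (p - 2) * A + (q - 1) * c ^ (q - 2) * B) =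
          (2 - q) * c ^ (2 - q) * M + (p - q) * c ^ (p - q) * A) ∧
      0 < M + (p - 1) * c₁ ^ (p - 2) * A + (q - 1) * c₁ ^ (q - 2) * B ∧
      M + (p - 1) * c₂ ^ (p - 2) * A + (q - 1) * c₂ ^ (q - 2) * B < 0 := by
  have hc2 : 0 < c₂ := hc1.trans hc12
  have hApos : 0 < -A := neg_pos.mpr hA
  have hpq : 0 < p - q := by linarith
  have h2q : 0 < 2 - q := by linarith
  have hp2 : 0 < p - 2 := by linarith
  -- the identity, for any positive zero c of φ
  have key : ∀ c : ℝ, 0 < c → M * c ^ (2 - q) + A * c ^ (p - q) + B = 0 →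
      c ^ (2 - q) * (M + (p - 1) * c ^ (p - 2) * A + (q - 1) * c ^ (q - 2) * B) =
        (2 - q) * c ^ (2 - q) * M + (p - q) * c ^ (p - q) * A := by
    intro c hc hz
    have e1 : c ^ (2 - q) * c ^ (p - 2) = c ^ (p - q) := by
      rw [← Real.rpow_add hc]; ring_nf
    have e2 : c ^ (2 - q) * c ^ (q - 2) = 1 := by
      rw [← Real.rpow_add hc]; norm_num
    have hB' : B = -(M * c ^ (2 - q) + A * c ^ (p - q)) := by linarith
    have expand : c ^ (2 - q) * (M + (p - 1) * c ^ (p - 2) * A + (q - 1) * c ^ (q - 2) * B)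
        = c ^ (2 - q) * M + (p - 1) * (c ^ (2 - q) * c ^ (p - 2)) * A
          + (q - 1) * (c ^ (2 - q) * c ^ (q - 2)) * B := by ring
    rw [expand, e1, e2, hB']; ring
  have hkey : ∀ c : ℝ, c = c₁ ∨ c = c₂ →
      c ^ (2 - q) * (M + (p - 1) * c ^ (p - 2) * A + (q - 1) * c ^ (q - 2) * B) =
        (2 - q) * c ^ (2 - q) * M + (p - q) * c ^ (p - q) * A := by
    rintro c (rfl | rfl)
    · exact key _ hc1 hz1
    · exact key _ hc2 hz2
  -- Rolle's theorem for g(t) = M t^(2-q) + A t^(p-q)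
  set g : ℝ → ℝ := fun t => M * t ^ (2 - q) + A * t ^ (p - q) with hg
  set g' : ℝ → ℝ := fun t => M * ((2 - q) * t ^ (2 - q - 1)) + A * ((p - q) * t ^ (p - q - 1))
    with hg'
  have hcont : ContinuousOn g (Icc c₁ c₂) := by
    apply ContinuousOn.add
    · exact continuousOn_const.mul (continuousOn_id.rpow_const fun x hx =>
        Or.inl (ne_of_gt (lt_of_lt_of_le hc1 hx.1)))
    · exact continuousOn_const.mul (continuousOn_id.rpow_const fun x hx =>
        Or.inl (ne_of_gt (lt_of_lt_of_le hc1 hx.1)))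
  have hgI : g c₁ = g c₂ := by simp only [hg]; linarith
  have hderiv : ∀ x ∈ Ioo c₁ c₂, HasDerivAt g (g' x) x := by
    intro x hx
    have hx0 : x ≠ 0 := ne_of_gt (hc1.trans hx.1)
    exact ((Real.hasDerivAt_rpow_const (Or.inl hx0)).const_mul M).add
      ((Real.hasDerivAt_rpow_const (Or.inl hx0)).const_mul A)
  obtain ⟨ξ, hξ, hξ0⟩ := exists_hasDerivAt_eq_zero hc12 hcont hgI hderiv
  have hξpos : 0 < ξ := hc1.trans hξ.1
  -- from g'(ξ) = 0 : (2-q) M = (p-q)(-A) ξ^(p-2)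
  have hcrit : (2 - q) * M = (p - q) * (-A) * ξ ^ (p - 2) := by
    have h1 : M * ((2 - q) * ξ ^ (2 - q - 1)) = (-A) * ((p - q) * ξ ^ (p - q - 1)) := by
      simp only [hg'] at hξ0; linarith
    have e : ξ ^ (p - q - 1) = ξ ^ (2 - q - 1) * ξ ^ (p - 2) := by
      rw [← Real.rpow_add hξpos]; ring_nf
    rw [e] at h1
    have hpos : 0 < ξ ^ (2 - q - 1) := Real.rpow_pos_of_pos hξpos _
    have h2 : (M * (2 - q)) * ξ ^ (2 - q - 1)
        = ((-A) * (p - q) * ξ ^ (p - 2)) * ξ ^ (2 - q - 1) := by ring_nf; ring_nf at h1; linarith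
    have := mul_right_cancel₀ (ne_of_gt hpos) h2
    linarith
  refine ⟨hkey, ?_, ?_⟩
  · -- Φ(c₁) > 0 : c₁ < ξ so (p-q)(-A)c₁^(p-2) < (2-q)M
    have hlt : c₁ ^ (p - 2) < ξ ^ (p - 2) := Real.rpow_lt_rpow hc1.le hξ.1 hp2
    have hfac : 0 < (2 - q) * M - (p - q) * (-A) * c₁ ^ (p - 2) := by nlinarith [mul_lt_mul_of_pos_left hlt (mul_pos hpq hApos)]
    have e1 : c₁ ^ (p - q) = c₁ ^ (2 - q) * c₁ ^ (p - 2) := by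
      rw [← Real.rpow_add hc1]; ring_nf
    have hpos : 0 < c₁ ^ (2 - q) := Real.rpow_pos_of_pos hc1 _
    have hrhs : 0 < (2 - q) * c₁ ^ (2 - q) * M + (p - q) * c₁ ^ (p - q) * A := by
      rw [e1]; nlinarith
    have hid := key _ hc1 hz1
    rw [← hid] at hrhs
    have := (mul_pos_iff_of_pos_left hpos).mp hrhs
    linarith
  · -- Φ(c₂) < 0 : ξ < c₂ so (p-q)(-A)c₂^(p-2) > (2-q)M
    have hlt : ξ ^ (p - 2) < c₂ ^ (p - 2) := Real.rpow_lt_rpow hξpos.le hξ.2 hp2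
    have hfac : (2 - q) * M - (p - q) * (-A) * c₂ ^ (p - 2) < 0 := by nlinarith [mul_lt_mul_of_pos_left hlt (mul_pos hpq hApos)]
    have e1 : c₂ ^ (p - q) = c₂ ^ (2 - q) * c₂ ^ (p - 2) := by
      rw [← Real.rpow_add hc2]; ring_nf
    have hpos : 0 < c₂ ^ (2 - q) := Real.rpow_pos_of_pos hc2 _
    have hrhs : (2 - q) * c₂ ^ (2 - q) * M + (p - q) * c₂ ^ (p - q) * A < 0 := by
      rw [e1]; nlinarith
    have hid := key _ hc2 hz2
    rw [← hid] at hrhs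
    nlinarith [hrhs, hpos]
end
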